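/- For every n ≥ 6 there exist a finite alphabet Σ and a bifix-free language L ⊆ Σ* such that the set of left quotients {L.w : w ∈ Σ*} has exactly n elements and the syntactic complexity of L is exactly (n−1)^{n−3} + (n−2)^{n−3} + (n−3)·2^{n−3}. -/

import Mathlib

/-- The left quotient of a language `L` by a word `w`: `L.w = {u : wu ∈ L}`. -/
def leftQuotient {σ : Type*} (L : Set (List σ)) (w : List σ) : Set (List σ) :=
  {u : List σ | w ++ u ∈ L}

/-- A language is prefix-free if no word of the language is a proper prefix
of another word of the language. -/
def PrefixFree {σ : Type*} (L : Set (List σ)) : Prop :=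
  ∀ u ∈ L, ∀ v ∈ L, u <+: v → u = v

/-- A language is suffix-free if no word of the language is a proper suffix
of another word of the language. -/
def SuffixFree {σ : Type*} (L : Set (List σ)) : Prop :=
  ∀ u ∈ L, ∀ v ∈ L, u <:+ v → u = v

/-- The syntactic congruence of `L` on nonempty words:
`u ≈ v` iff for all words `x, y`, `xuy ∈ L ↔ xvy ∈ L`. -/
def synSetoid {σ : Type*} (L : Set (List σ)) : Setoid {w : List σ // w ≠ []} where
  r u v := ∀ x y : List σ, x ++ u.val ++ y ∈ L ↔ x ++ v.val ++ y ∈ L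
  iseqv := ⟨fun _ _ _ => Iff.rfl, fun h x y => (h x y).symm,
    fun h₁ h₂ x y => (h₁ x y).trans (h₂ x y)⟩

/-- The syntactic complexity of `L`: the number of classes of the syntactic
congruence on nonempty words. -/
noncomputable def synComplexity {σ : Type*} (L : Set (List σ)) : ℕ :=
  Nat.card (Quotient (synSetoid L))


namespace S17

variable (m : ℕ)

abbrev Q (m : ℕ) := Fin (m + 6)

def z : Q m := ⟨0, by omega⟩
def ff : Q m := ⟨m + 4, by omega⟩
def bb : Q m := ⟨m + 5, by omega⟩

def mid (q : Q m) : Prop := 0 < q.val ∧ q.val < m + 4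

instance : DecidablePred (mid m) := fun _ => instDecidableAnd

variable {m}

lemma z_val : (z m).val = 0 := rfl
lemma ff_val : (ff m).val = m + 4 := rfl
lemma bb_val : (bb m).val = m + 5 := rfl

lemma ff_ne_bb : ff m ≠ bb m := by simp [Fin.ext_iff, ff, bb]
lemma bb_ne_ff : bb m ≠ ff m := by simp [Fin.ext_iff, ff, bb]
lemma z_ne_ff : z m ≠ ff m := by simp [Fin.ext_iff, ff, z]
lemma bb_ne_z : bb m ≠ z m := by simp [Fin.ext_iff, bb, z]
lemma ff_ne_z : ff m ≠ z m := by simp [Fin.ext_iff, ff, z]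
lemma not_mid_z : ¬ mid m (z m) := by simp [mid, z]
lemma not_mid_ff : ¬ mid m (ff m) := by simp [mid, ff]
lemma not_mid_bb : ¬ mid m (bb m) := by simp [mid, bb]
lemma mid.ne_z {q : Q m} (h : mid m q) : q ≠ z m := by
  rintro rfl; exact not_mid_z h
lemma mid.ne_ff {q : Q m} (h : mid m q) : q ≠ ff m := by
  rintro rfl; exact not_mid_ff h
lemma mid.ne_bb {q : Q m} (h : mid m q) : q ≠ bb m := by
  rintro rfl; exact not_mid_bb h

lemma cases4 (q : Q m) : q = z m ∨ mid m q ∨ q = ff m ∨ q = bb m := by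
  have := q.isLt
  simp only [Fin.ext_iff, mid, z_val, ff_val, bb_val]
  omega

def W : Set (Q m → Q m) :=
  {t | t (bb m) = bb m ∧ t (ff m) = bb m ∧ (∀ q, t q ≠ z m) ∧
    (t (z m) = bb m ∨
     (t (z m) = ff m ∧ ∀ q, mid m q → t q ≠ ff m) ∨
     (mid m (t (z m)) ∧ ∀ q, mid m q → t q = ff m ∨ t q = bb m))}

lemma comp_mem {t s : Q m → Q m} (ht : t ∈ W) (hs : s ∈ W) :
    (fun q => s (t q)) ∈ W := by
  obtain ⟨htb, htf, htz, htd⟩ := ht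
  obtain ⟨hsb, hsf, hsz, _⟩ := hs
  refine ⟨by simp [htb, hsb], by simp [htf, hsb], fun q => hsz _, ?_⟩
  rcases htd with h | ⟨h, _⟩ | ⟨h, h2⟩
  · left; simp only [h, hsb]
  · left; simp only [h, hsf]
  · rcases cases4 (s (t (z m))) with hc | hc | hc | hc
    · exact absurd hc (hsz _)
    · right; right
      refine ⟨hc, fun q hq => ?_⟩
      rcases h2 q hq with e | e <;> simp only [e, hsf, hsb] <;> simp
    · right; left
      refine ⟨hc, fun q hq => ?_⟩
      rcases h2 q hq with e | e <;> simp only [e, hsf, hsb] <;> exact bb_ne_ff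
    · left; exact hc

def build (v : Q m) (g : Q m → Q m) : Q m → Q m :=
  fun q => if q = z m then v else if mid m q then g q else bb m

lemma build_z (v : Q m) (g) : build v g (z m) = v := if_pos rfl

lemma build_mid (v : Q m) (g) {q : Q m} (h : mid m q) : build v g q = g q := by
  rw [build, if_neg h.ne_z, if_pos h]

lemma build_ff (v : Q m) (g) : build v g (ff m) = bb m := by
  rw [build, if_neg ff_ne_z, if_neg not_mid_ff]

lemma build_bb (v : Q m) (g) : build v g (bb m) = bb m := by
  rw [build, if_neg bb_ne_z, if_neg not_mid_bb]


variable (m)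

abbrev Sig (m : ℕ) := {t : Q m → Q m // t ∈ W}

def run (w : List (Sig m)) (q : Q m) : Q m :=
  w.foldl (fun s a => a.1 s) q

variable {m}

@[simp] lemma run_nil (q : Q m) : run m [] q = q := rfl

@[simp] lemma run_cons (a : Sig m) (w : List (Sig m)) (q : Q m) :
    run m (a :: w) q = run m w (a.1 q) := rfl

lemma run_append (x y : List (Sig m)) (q : Q m) :
    run m (x ++ y) q = run m y (run m x q) := by
  simp only [run, List.foldl_append]

lemma run_mem {w : List (Sig m)} (hw : w ≠ []) : (fun q => run m w q) ∈ W := by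
  induction w with
  | nil => exact absurd rfl hw
  | cons a w ih =>
    rcases eq_or_ne w [] with rfl | hw'
    · simpa using a.2
    · have : (fun q => run m (a :: w) q) = fun q => (fun r => run m w r) (a.1 q) := rfl
      rw [this]
      exact comp_mem a.2 (ih hw')

-- letters
def a1 : Sig m := ⟨build (bb m) (fun _ => bb m), by
  refine ⟨build_bb _ _, build_ff _ _, fun q => ?_, Or.inl (build_z _ _)⟩
  rcases cases4 q with h | h | h | h
  · rw [h, build_z]; exact bb_ne_z
  · rw [build_mid _ _ h]; exact bb_ne_z
  · rw [h, build_ff]; exact bb_ne_z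
  · rw [h, build_bb]; exact bb_ne_z⟩

def a2 : Sig m := ⟨build (ff m) (fun _ => bb m), by
  refine ⟨build_bb _ _, build_ff _ _, fun q => ?_, Or.inr (Or.inl ⟨build_z _ _, fun q hq => ?_⟩)⟩
  · rcases cases4 q with h | h | h | h
    · rw [h, build_z]; exact ff_ne_z
    · rw [build_mid _ _ h]; exact bb_ne_z
    · rw [h, build_ff]; exact bb_ne_z
    · rw [h, build_bb]; exact bb_ne_z
  · rw [build_mid _ _ hq]; exact bb_ne_ff⟩

lemma mid_p1 : mid m ⟨1, by omega⟩ := by constructor <;> simp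

def goto (p : Q m) (hp : mid m p) : Sig m := ⟨build p (fun _ => bb m), by
  refine ⟨build_bb _ _, build_ff _ _, fun q => ?_, Or.inr (Or.inr ⟨?_, fun q hq => ?_⟩)⟩
  · rcases cases4 q with h | h | h | h
    · rw [h, build_z]; exact hp.ne_z
    · rw [build_mid _ _ h]; exact bb_ne_z
    · rw [h, build_ff]; exact bb_ne_z
    · rw [h, build_bb]; exact bb_ne_z
  · rw [build_z]; exact hp
  · rw [build_mid _ _ hq]; exact Or.inr rfl⟩

def sel (p : Q m) : Sig m := ⟨build ⟨1, by omega⟩ (fun q => if q = p then ff m else bb m), by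
  refine ⟨build_bb _ _, build_ff _ _, fun q => ?_, Or.inr (Or.inr ⟨?_, fun q hq => ?_⟩)⟩
  · rcases cases4 q with h | h | h | h
    · rw [h, build_z]; intro hc; rw [Fin.ext_iff] at hc; simp [z_val] at hc
    · rw [build_mid _ _ h]
      split
      · exact ff_ne_z
      · exact bb_ne_z
    · rw [h, build_ff]; exact bb_ne_z
    · rw [h, build_bb]; exact bb_ne_z
  · rw [build_z]; exact mid_p1
  · rw [build_mid _ _ hq]
    split
    · exact Or.inl rfl
    · exact Or.inr rfl⟩

lemma sel_self (p : Q m) (hp : mid m p) : (sel p).1 p = ff m := by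
  simp [sel, build_mid _ _ hp]

lemma sel_other {p q : Q m} (hq : mid m q) (hne : q ≠ p) : (sel p).1 q = bb m := by
  simp [sel, build_mid _ _ hq, hne]

lemma sel_z (p : Q m) : (sel p).1 (z m) = (⟨1, by omega⟩ : Q m) := by
  simp [sel, build_z]

lemma sel_bb (p : Q m) : (sel p).1 (bb m) = bb m := by
  simp [sel, build_bb]

lemma a2_z : (a2 : Sig m).1 (z m) = ff m := by simp [a2, build_z]

lemma a2_bb : (a2 : Sig m).1 (bb m) = bb m := by simp [a2, build_bb]

lemma reach (q : Q m) : ∃ x : List (Sig m), run m x (z m) = q := by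
  rcases cases4 q with h | h | h | h
  · exact ⟨[], h.symm⟩
  · exact ⟨[goto q h], by simp [goto, build_z]⟩
  · exact ⟨[a2], by simp [a2, build_z, h]⟩
  · exact ⟨[a1], by simp [a1, build_z, h]⟩

lemma distinguish (q q' : Q m) (h : ∀ y, run m y q = ff m ↔ run m y q' = ff m) :
    q = q' := by
  by_contra hne
  have hnil := h []
  simp only [run_nil] at hnil
  have key : ∀ (r r' : Q m), r ≠ r' → (∀ y, run m y r = ff m ↔ run m y r' = ff m) →
      (r = z m ∨ mid m r) → (r' = z m ∨ mid m r' ∨ r' = bb m) → False := by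
    intro r r' hrr hy hr hr'
    rcases hr with rfl | hr
    · rcases hr' with rfl | hr' | rfl
      · exact hrr rfl
      · -- z vs mid: use sel r'
        have := (hy [sel r']).mpr
          (by simp only [run_cons, run_nil]; exact sel_self r' hr')
        simp only [run_cons, run_nil, sel_z] at this
        rw [Fin.ext_iff, ff_val] at this; simp at this
      · -- z vs bb: use [a2]
        have := (hy [a2]).mp (by simp only [run_cons, run_nil]; exact a2_z)
        simp only [run_cons, run_nil, a2_bb] at this
        exact bb_ne_ff this
    · rcases hr' with rfl | hr' | rfl
      · have := (hy [sel r]).mp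
          (by simp only [run_cons, run_nil]; exact sel_self r hr)
        simp only [run_cons, run_nil, sel_z] at this
        rw [Fin.ext_iff, ff_val] at this; simp at this
      · have := (hy [sel r]).mp
          (by simp only [run_cons, run_nil]; exact sel_self r hr)
        simp only [run_cons, run_nil] at this
        rw [sel_other hr' (fun e => hrr (e.symm))] at this
        exact bb_ne_ff this
      · have := (hy [sel r]).mp
          (by simp only [run_cons, run_nil]; exact sel_self r hr)
        simp only [run_cons, run_nil, sel_bb] at this
        exact bb_ne_ff this
  rcases cases4 q with h1 | h1 | h1 | h1 <;> rcases cases4 q' with h2 | h2 | h2 | h2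
  · exact hne (h1.trans h2.symm)
  · exact key q q' hne h (Or.inl h1) (Or.inr (Or.inl h2))
  · rw [h1] at hnil; exact z_ne_ff (hnil.mpr h2)
  · exact key q q' hne h (Or.inl h1) (Or.inr (Or.inr h2))
  · exact key q' q (Ne.symm hne) (fun y => (h y).symm) (Or.inl h2) (Or.inr (Or.inl h1))
  · exact key q q' hne h (Or.inr h1) (Or.inr (Or.inl h2))
  · exact h1.ne_ff (hnil.mpr h2)
  · exact key q q' hne h (Or.inr h1) (Or.inr (Or.inr h2))
  · rw [h1, h2] at hnil; exact z_ne_ff (hnil.mp rfl)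
  · rw [h1] at hnil; exact h2.ne_ff (hnil.mp rfl)
  · exact hne (h1.trans h2.symm)
  · rw [h1, h2] at hnil; exact bb_ne_ff (hnil.mp rfl)
  · exact key q' q (Ne.symm hne) (fun y => (h y).symm) (Or.inl h2) (Or.inr (Or.inr h1))
  · exact key q' q (Ne.symm hne) (fun y => (h y).symm) (Or.inr h2) (Or.inr (Or.inr h1))
  · rw [h1, h2] at hnil; exact bb_ne_ff (hnil.mpr rfl)
  · exact hne (h1.trans h2.symm)


variable (m)

def L : Set (List (Sig m)) := {w | run m w (z m) = ff m}

variable {m}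

lemma not_nil_mem : [] ∉ L m := by
  simp only [L, Set.mem_setOf_eq, run_nil]
  exact z_ne_ff

lemma mem_L {w : List (Sig m)} (hw : w ∈ L m) : w ≠ [] := by
  rintro rfl; exact not_nil_mem hw

lemma prefixFree : PrefixFree (L m) := by
  intro u hu v hv huv
  obtain ⟨y, rfl⟩ := huv
  rcases eq_or_ne y [] with rfl | hy
  · simp
  · exfalso
    have hv' : run m y (run m u (z m)) = ff m := by
      rw [← run_append]; exact hv
    rw [hu] at hv'
    have := (run_mem hy).2.1
    simp only at this
    rw [this] at hv'
    exact bb_ne_ff hv'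

lemma suffixFree : SuffixFree (L m) := by
  intro u hu v hv huv
  obtain ⟨x, rfl⟩ := huv
  rcases eq_or_ne x [] with rfl | hx
  · simp
  · exfalso
    obtain ⟨hub, huf, huz, hud⟩ := run_mem (mem_L hu)
    simp only at hub huf huz hud
    have hu' : run m u (z m) = ff m := hu
    have hd2 : ∀ q, mid m q → run m u q ≠ ff m := by
      rcases hud with h | ⟨_, h⟩ | ⟨h, _⟩
      · rw [hu'] at h; exact absurd h ff_ne_bb
      · exact h
      · rw [hu'] at h; exact absurd h not_mid_ff
    have hv' : run m u (run m x (z m)) = ff m := by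
      rw [← run_append]; exact hv
    have hxz := (run_mem hx).2.2.1 (z m)
    simp only at hxz
    rcases cases4 (run m x (z m)) with h | h | h | h
    · exact hxz h
    · exact hd2 _ h hv'
    · rw [h, huf] at hv'; exact bb_ne_ff hv'
    · rw [h, hub] at hv'; exact bb_ne_ff hv'

def Acc (q : Q m) : Set (List (Sig m)) := {u | run m u q = ff m}

lemma acc_inj : Function.Injective (Acc (m := m)) := by
  intro q q' h
  refine distinguish q q' (fun y => ?_)
  constructor
  · intro hy; exact (Set.ext_iff.mp h y).mp hy
  · intro hy; exact (Set.ext_iff.mp h y).mpr hy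

lemma leftQuotient_eq (w : List (Sig m)) :
    leftQuotient (L m) w = Acc (run m w (z m)) := by
  ext u
  simp only [leftQuotient, L, Acc, Set.mem_setOf_eq, run_append]

lemma quot_set_eq :
    {S : Set (List (Sig m)) | ∃ w : List (Sig m), S = leftQuotient (L m) w}
      = Set.range (Acc (m := m)) := by
  ext S
  constructor
  · rintro ⟨w, rfl⟩; exact ⟨run m w (z m), (leftQuotient_eq w).symm⟩
  · rintro ⟨q, rfl⟩
    obtain ⟨x, hx⟩ := reach q
    exact ⟨x, by rw [leftQuotient_eq, hx]⟩

lemma quot_count :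
    {S : Set (List (Sig m)) | ∃ w : List (Sig m), S = leftQuotient (L m) w}.ncard
      = m + 6 := by
  rw [quot_set_eq, ← Set.image_univ, Set.ncard_image_of_injective _ acc_inj,
    Set.ncard_univ, Nat.card_eq_fintype_card, Fintype.card_fin]

-- syntactic congruence ↔ equality of transformations
lemma syn_iff (u v : {w : List (Sig m) // w ≠ []}) :
    (∀ x y : List (Sig m), x ++ u.val ++ y ∈ L m ↔ x ++ v.val ++ y ∈ L m) ↔
      (fun q => run m u.val q) = (fun q => run m v.val q) := by
  constructor
  · intro h
    funext q
    obtain ⟨x, hx⟩ := reach q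
    refine distinguish _ _ (fun y => ?_)
    have := h x y
    simp only [L, Set.mem_setOf_eq, run_append, hx] at this
    exact this
  · intro h x y
    simp only [L, Set.mem_setOf_eq, run_append]
    rw [show run m u.val (run m x (z m)) = run m v.val (run m x (z m)) from
      congrFun h _]

noncomputable def synEquiv :
    Quotient (synSetoid (L m)) ≃ {t : Q m → Q m // t ∈ W} := by
  refine Equiv.ofBijective
    (Quotient.lift (fun w : {w : List (Sig m) // w ≠ []} =>
      (⟨fun q => run m w.val q, run_mem w.2⟩ : {t : Q m → Q m // t ∈ W}))
      (fun u v huv => Subtype.ext ((syn_iff u v).mp huv))) ⟨?_, ?_⟩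
  · intro a b
    refine Quotient.inductionOn₂ a b (fun u v h => ?_)
    refine Quotient.sound ((syn_iff u v).mpr ?_)
    exact congrArg Subtype.val h
  · intro t
    refine ⟨⟦⟨[⟨t.1, t.2⟩], by simp⟩⟧, ?_⟩
    apply Subtype.ext
    funext q
    rfl

lemma synComplexity_eq :
    synComplexity (L m) = Nat.card {t : Q m → Q m // t ∈ W} := by
  rw [synComplexity]
  exact Nat.card_congr synEquiv


-- counting
abbrev Mid (m : ℕ) := {q : Q m // mid m q}
abbrev N1 (m : ℕ) := {v : Q m // v ≠ z m}
abbrev N2 (m : ℕ) := {v : Q m // v ≠ z m ∧ v ≠ ff m}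

def eMid : Mid m ≃ Fin (m + 3) where
  toFun q := ⟨q.1.val - 1, by have := q.2.1; have := q.2.2; omega⟩
  invFun i := ⟨⟨i.val + 1, by omega⟩, by constructor <;> simp <;> omega⟩
  left_inv q := by
    apply Subtype.ext; apply Fin.ext
    have := q.2.1
    simp; omega
  right_inv i := by apply Fin.ext; simp

def eN1 : N1 m ≃ Fin (m + 5) where
  toFun v := ⟨v.1.val - 1, by
    have h1 := v.1.isLt
    have h2 : v.1.val ≠ 0 := fun hc => v.2 (Fin.ext hc)
    omega⟩
  invFun i := ⟨⟨i.val + 1, by omega⟩, by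
    intro hc; rw [Fin.ext_iff] at hc; simp [z_val] at hc⟩
  left_inv v := by
    apply Subtype.ext; apply Fin.ext
    have h2 : v.1.val ≠ 0 := fun hc => v.2 (Fin.ext hc)
    simp; omega
  right_inv i := by apply Fin.ext; simp

def eN2 : N2 m ≃ Fin (m + 4) where
  toFun v := ⟨if v.1.val = m + 5 then m + 3 else v.1.val - 1, by
    have h1 := v.1.isLt
    have h2 : v.1.val ≠ 0 := fun hc => v.2.1 (Fin.ext hc)
    have h3 : v.1.val ≠ m + 4 := fun hc => v.2.2 (Fin.ext hc)
    split <;> omega⟩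
  invFun i := ⟨⟨if i.val = m + 3 then m + 5 else i.val + 1, by
    have := i.isLt; split <;> omega⟩, by
    have := i.isLt
    constructor <;> intro hc <;> rw [Fin.ext_iff] at hc <;>
      simp only [z_val, ff_val] at hc <;> split at hc <;> omega⟩
  left_inv v := by
    apply Subtype.ext; apply Fin.ext
    have h1 := v.1.isLt
    have h2 : v.1.val ≠ 0 := fun hc => v.2.1 (Fin.ext hc)
    have h3 : v.1.val ≠ m + 4 := fun hc => v.2.2 (Fin.ext hc)
    simp only []
    split <;> split <;> omega
  right_inv i := by
    apply Fin.ext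
    have := i.isLt
    simp only []
    split <;> split <;> omega

abbrev Dat (m : ℕ) := (Mid m → N1 m) ⊕ (Mid m → N2 m) ⊕ (Mid m × (Mid m → Bool))

def wEquiv : {t : Q m → Q m // t ∈ W} ≃ Dat m where
  toFun t :=
    if h1 : t.1 (z m) = bb m then
      Sum.inl (fun q => ⟨t.1 q.1, t.2.2.2.1 q.1⟩)
    else if h2 : t.1 (z m) = ff m then
      Sum.inr (Sum.inl (fun q => ⟨t.1 q.1, ⟨t.2.2.2.1 q.1, by
        rcases t.2.2.2.2 with h | h | h
        · exact absurd h h1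
        · exact h.2 q.1 q.2
        · rw [h2] at h; exact absurd h.1 not_mid_ff⟩⟩))
    else
      Sum.inr (Sum.inr (⟨⟨t.1 (z m), by
        rcases t.2.2.2.2 with h | h | h
        · exact absurd h h1
        · exact absurd h.1 h2
        · exact h.1⟩,
        fun q => decide (t.1 q.1 = ff m)⟩))
  invFun d :=
    match d with
    | Sum.inl g => ⟨build (bb m) (fun q => if h : mid m q then (g ⟨q, h⟩).1 else bb m), by
        refine ⟨build_bb _ _, build_ff _ _, fun q => ?_, Or.inl (build_z _ _)⟩
        rcases cases4 q with h | h | h | h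
        · rw [h, build_z]; exact bb_ne_z
        · rw [build_mid _ _ h, dif_pos h]; exact (g ⟨q, h⟩).2
        · rw [h, build_ff]; exact bb_ne_z
        · rw [h, build_bb]; exact bb_ne_z⟩
    | Sum.inr (Sum.inl g) =>
        ⟨build (ff m) (fun q => if h : mid m q then (g ⟨q, h⟩).1 else bb m), by
        refine ⟨build_bb _ _, build_ff _ _, fun q => ?_,
          Or.inr (Or.inl ⟨build_z _ _, fun q hq => ?_⟩)⟩
        · rcases cases4 q with h | h | h | h
          · rw [h, build_z]; exact ff_ne_z
          · rw [build_mid _ _ h, dif_pos h]; exact (g ⟨q, h⟩).2.1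
          · rw [h, build_ff]; exact bb_ne_z
          · rw [h, build_bb]; exact bb_ne_z
        · rw [build_mid _ _ hq, dif_pos hq]; exact (g ⟨q, hq⟩).2.2⟩
    | Sum.inr (Sum.inr (p, g)) =>
        ⟨build p.1 (fun q => if h : mid m q then
            (if g ⟨q, h⟩ then ff m else bb m) else bb m), by
        refine ⟨build_bb _ _, build_ff _ _, fun q => ?_,
          Or.inr (Or.inr ⟨?_, fun q hq => ?_⟩)⟩
        · rcases cases4 q with h | h | h | h
          · rw [h, build_z]; exact p.2.ne_z
          · rw [build_mid _ _ h, dif_pos h]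
            split
            · exact ff_ne_z
            · exact bb_ne_z
          · rw [h, build_ff]; exact bb_ne_z
          · rw [h, build_bb]; exact bb_ne_z
        · rw [build_z]; exact p.2
        · rw [build_mid _ _ hq, dif_pos hq]
          split
          · exact Or.inl rfl
          · exact Or.inr rfl⟩
  left_inv t := by
    obtain ⟨t, htb, htf, htz, htd⟩ := t
    by_cases h1 : t (z m) = bb m
    · simp only [dif_pos h1]
      apply Subtype.ext
      funext q
      simp only
      rcases cases4 q with h | h | h | h
      · rw [h, build_z, h1]
      · rw [build_mid _ _ h, dif_pos h]
      · rw [h, build_ff, htf]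
      · rw [h, build_bb, htb]
    · by_cases h2 : t (z m) = ff m
      · simp only [dif_neg h1, dif_pos h2]
        apply Subtype.ext
        funext q
        simp only
        rcases cases4 q with h | h | h | h
        · rw [h, build_z, h2]
        · rw [build_mid _ _ h, dif_pos h]
        · rw [h, build_ff, htf]
        · rw [h, build_bb, htb]
      · simp only [dif_neg h1, dif_neg h2]
        apply Subtype.ext
        funext q
        simp only
        have hd3 : ∀ q, mid m q → t q = ff m ∨ t q = bb m := by
          rcases htd with h | h | h
          · exact absurd h h1
          · exact absurd h.1 h2
          · exact h.2
        rcases cases4 q with h | h | h | h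
        · rw [h, build_z]
        · rw [build_mid _ _ h, dif_pos h]
          rcases hd3 q h with e | e
          · simp [e]
          · simp [e, bb_ne_ff]
        · rw [h, build_ff, htf]
        · rw [h, build_bb, htb]
  right_inv d := by
    match d with
    | Sum.inl g =>
      simp only
      rw [dif_pos (build_z _ _)]
      congr 1
      funext q
      apply Subtype.ext
      dsimp only
      rw [build_mid _ _ q.2, dif_pos q.2]
    | Sum.inr (Sum.inl g) =>
      simp only
      rw [dif_neg (by rw [build_z]; exact ff_ne_bb), dif_pos (build_z _ _)]
      congr 2
      funext q
      apply Subtype.ext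
      dsimp only
      rw [build_mid _ _ q.2, dif_pos q.2]
    | Sum.inr (Sum.inr (p, g)) =>
      simp only
      rw [dif_neg (by rw [build_z]; exact p.2.ne_bb), dif_neg (by rw [build_z]; exact p.2.ne_ff)]
      congr 2
      refine Prod.ext ?_ ?_
      · apply Subtype.ext
        dsimp only
        exact build_z _ _
      · funext q
        dsimp only
        simp only [build_mid _ _ q.2, dif_pos q.2]
        show decide ((if g q = true then ff m else bb m) = ff m) = g q
        cases hg : g q <;> simp [bb_ne_ff]


lemma card_W :
    Nat.card {t : Q m → Q m // t ∈ W}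
      = (m + 5) ^ (m + 3) + (m + 4) ^ (m + 3) + (m + 3) * 2 ^ (m + 3) := by
  rw [Nat.card_congr (wEquiv (m := m))]
  rw [show Dat m = ((Mid m → N1 m) ⊕ ((Mid m → N2 m) ⊕ (Mid m × (Mid m → Bool)))) from rfl]
  rw [Nat.card_sum, Nat.card_sum, Nat.card_prod,
    Nat.card_congr (Equiv.arrowCongr (eMid (m := m)) (eN1 (m := m))),
    Nat.card_congr (Equiv.arrowCongr (eMid (m := m)) (eN2 (m := m))),
    Nat.card_congr (Equiv.arrowCongr (eMid (m := m)) (Equiv.refl Bool)),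
    Nat.card_congr (eMid (m := m))]
  simp [Nat.card_eq_fintype_card, Fintype.card_fun]
  omega

end S17

theorem stmt17 (n : ℕ) (hn : 6 ≤ n) :
    ∃ (σ : Type) (_ : Fintype σ) (L : Set (List σ)),
      PrefixFree L ∧ SuffixFree L ∧
      {S : Set (List σ) | ∃ w : List σ, S = leftQuotient L w}.ncard = n ∧
      synComplexity L = (n - 1) ^ (n - 3) + (n - 2) ^ (n - 3) + (n - 3) * 2 ^ (n - 3) := by
  obtain ⟨m, rfl⟩ : ∃ m, n = m + 6 := ⟨n - 6, by omega⟩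
  refine ⟨S17.Sig m, Fintype.ofFinite _, S17.L m, S17.prefixFree, S17.suffixFree, ?_, ?_⟩
  · exact S17.quot_count
  · rw [S17.synComplexity_eq, S17.card_W]
    have h1 : m + 6 - 1 = m + 5 := by omega
    have h2 : m + 6 - 2 = m + 4 := by omega
    have h3 : m + 6 - 3 = m + 3 := by omega
    rw [h1, h2, h3]
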